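/- Let H be a real Hilbert space, let u_1, …, u_m ∈ H be a finite family of snapshots, and let C be the m×m real Gram (correlation) matrix C_{ij} = ⟪u_i, u_j⟫. C is symmetric positive semidefinite; let λ_1 ≥ λ_2 ≥ … ≥ λ_m ≥ 0 be its eigenvalues listed in decreasing order. Then for every N with 0 ≤ N ≤ m and every closed subspace V ⊆ H of finite dimension at most N, with Π_V the orthogonal projection of H onto V, one has Σ_{i=1}^m ‖u_i − Π_V u_i‖² ≥ Σ_{i=N+1}^m λ_i. -/

import Mathlib

open scoped RealInnerProductSpace

/-- Lower bound for the total squared projection error of the snapshots onto any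
subspace of dimension at most `N`: it is at least the tail sum of the eigenvalues
of the Gram (correlation) matrix, listed in decreasing order. -/
theorem pod_projection_error_lower_bound
    {H : Type*} [NormedAddCommGroup H] [InnerProductSpace ℝ H] [CompleteSpace H]
    {m : ℕ} (u : Fin m → H)
    (C : Matrix (Fin m) (Fin m) ℝ)
    (hC : ∀ i j, C i j = ⟪u i, u j⟫)
    (lam : Fin m → ℝ) (hdec : Antitone lam)
    (ψ : Fin m → Fin m → ℝ)
    (hON : ∀ i j, (∑ k, ψ i k * ψ j k) = if i = j then 1 else 0)
    (heig : ∀ i, C.mulVec (ψ i) = lam i • ψ i)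
    (N : ℕ) (hN : N ≤ m)
    (V : Submodule ℝ H) (hVclosed : IsClosed (V : Set H))
    [FiniteDimensional ℝ V] (hdim : Module.finrank ℝ V ≤ N) :
    ∑ i ∈ Finset.univ.filter (fun i : Fin m => N ≤ (i : ℕ)), lam i ≤
      ∑ i, ‖u i - (V.orthogonalProjectionOnto (u i) : H)‖ ^ 2 := by
  classical
  set P : H →L[ℝ] H := V.subtypeL.comp (V.orthogonalProjectionOnto) with hPdef
  have hPapp : ∀ x : H, P x = (V.orthogonalProjectionOnto x : H) := fun _ => rfl
  -- Pythagoras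
  have pyth : ∀ x : H, ‖x - P x‖ ^ 2 = ‖x‖ ^ 2 - ‖P x‖ ^ 2 := by
    intro x
    have horth : ⟪x - P x, P x⟫ = 0 := by
      have h1 : x - P x ∈ Vᗮ := V.sub_starProjection_mem_orthogonal x
      exact (Submodule.mem_orthogonal' V _).mp h1 _ (V.orthogonalProjectionOnto x).2
    have h2 := norm_add_sq_real (x - P x) (P x)
    rw [sub_add_cancel, horth] at h2
    linarith
  have hPnormle : ∀ x : H, ‖P x‖ ^ 2 ≤ ‖x‖ ^ 2 := by
    intro x
    have h1 := pyth x
    nlinarith [sq_nonneg ‖x - P x‖]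
  -- column orthonormality
  have hON' : ∀ k l, (∑ j, ψ j k * ψ j l) = if k = l then 1 else 0 := by
    set Ψ : Matrix (Fin m) (Fin m) ℝ := Matrix.of ψ with hΨ
    have h1 : Ψ * Ψ.transpose = 1 := by
      ext i j
      simpa [Matrix.mul_apply, Matrix.transpose_apply, hΨ, Matrix.one_apply] using hON i j
    have h2 : Ψ.transpose * Ψ = 1 := mul_eq_one_comm.mp h1
    intro k l
    have h3 := congrFun (congrFun h2 k) l
    simpa [Matrix.mul_apply, Matrix.transpose_apply, hΨ, Matrix.one_apply] using h3
  -- the eigenvectors in H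
  set v : Fin m → H := fun j => ∑ i, ψ j i • u i with hvdef
  have hmulvec : ∀ (b : Fin m) (k : Fin m), (∑ l, ψ b l * ⟪u k, u l⟫) = lam b * ψ b k := by
    intro b k
    have h2 : (∑ l, C k l * ψ b l) = lam b * ψ b k := by
      have := congrFun (heig b) k
      simpa [Matrix.mulVec, dotProduct] using this
    rw [← h2]
    exact Finset.sum_congr rfl fun l _ => by rw [hC k l, mul_comm]
  have hinner_vv : ∀ a b, ⟪v a, v b⟫ = if a = b then lam a else 0 := by
    intro a b
    have h1 : ⟪v a, v b⟫ = ∑ k, ψ a k * ∑ l, ψ b l * ⟪u k, u l⟫ := by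
      simp only [hvdef, sum_inner, inner_sum, real_inner_smul_left, real_inner_smul_right]
      rw [Finset.sum_comm]
      refine Finset.sum_congr rfl fun k _ => ?_
      rw [Finset.mul_sum]
      exact Finset.sum_congr rfl fun l _ => by ring
    rw [h1]
    have h2 : ∀ k ∈ Finset.univ, ψ a k * ∑ l, ψ b l * ⟪u k, u l⟫ = lam b * (ψ a k * ψ b k) := by
      intro k _
      rw [hmulvec b k]; ring
    rw [Finset.sum_congr rfl h2, ← Finset.mul_sum, hON a b]
    by_cases hab : a = b
    · subst hab; simp
    · simp [hab]
  have hlam0 : ∀ j, 0 ≤ lam j := by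
    intro j
    have := hinner_vv j j
    rw [if_pos rfl] at this
    rw [← this]
    exact real_inner_self_nonneg
  have hnormv : ∀ j, ‖v j‖ ^ 2 = lam j := by
    intro j
    rw [← real_inner_self_eq_norm_sq, hinner_vv, if_pos rfl]
  -- key bilinear identity
  have key : ∀ T : H →L[ℝ] H, ∑ j, ‖T (v j)‖ ^ 2 = ∑ k, ‖T (u k)‖ ^ 2 := by
    intro T
    have expand : ∀ j, ‖T (v j)‖ ^ 2
        = ∑ k, ∑ l, ψ j k * ψ j l * ⟪T (u k), T (u l)⟫ := by
      intro j
      rw [← real_inner_self_eq_norm_sq]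
      have hTv : T (v j) = ∑ i, ψ j i • T (u i) := by
        simp [hvdef, map_sum, map_smul]
      rw [hTv]
      simp only [sum_inner, inner_sum, real_inner_smul_left, real_inner_smul_right]
      refine Finset.sum_congr rfl fun k _ => Finset.sum_congr rfl fun l _ => ?_
      rw [real_inner_comm (T (u l)) (T (u k))]
      ring
    calc ∑ j, ‖T (v j)‖ ^ 2
        = ∑ j, ∑ k, ∑ l, ψ j k * ψ j l * ⟪T (u k), T (u l)⟫ :=
          Finset.sum_congr rfl fun j _ => expand j
      _ = ∑ k, ∑ l, (∑ j, ψ j k * ψ j l) * ⟪T (u k), T (u l)⟫ := by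
          rw [Finset.sum_comm]
          refine Finset.sum_congr rfl fun k _ => ?_
          rw [Finset.sum_comm]
          refine Finset.sum_congr rfl fun l _ => ?_
          rw [Finset.sum_mul]
      _ = ∑ k, ‖T (u k)‖ ^ 2 := by
          refine Finset.sum_congr rfl fun k _ => ?_
          rw [Finset.sum_congr rfl fun l (_ : l ∈ Finset.univ) => by rw [hON' k l]]
          simp [real_inner_self_eq_norm_sq]
  have tracesum : ∑ k, ‖u k‖ ^ 2 = ∑ j, lam j := by
    have h1 := key (ContinuousLinearMap.id ℝ H)
    simp only [ContinuousLinearMap.id_apply] at h1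
    rw [← h1]
    exact Finset.sum_congr rfl fun j _ => hnormv j
  have hproj : ∑ j, ‖P (v j)‖ ^ 2 = ∑ k, ‖P (u k)‖ ^ 2 := key P
  -- the coefficients c j
  set c : Fin m → ℝ := fun j => if lam j = 0 then 0 else ‖P (v j)‖ ^ 2 / lam j with hcdef
  have hPv_le : ∀ j, ‖P (v j)‖ ^ 2 ≤ lam j := fun j => (hnormv j) ▸ hPnormle (v j)
  have hc_mul : ∀ j, c j * lam j = ‖P (v j)‖ ^ 2 := by
    intro j
    by_cases h : lam j = 0
    · have hv0 : v j = 0 := by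
        have := hnormv j
        rw [h, pow_eq_zero_iff (by norm_num : 2 ≠ 0), norm_eq_zero] at this
        exact this
      simp [hcdef, h, hv0]
    · simp only [hcdef, if_neg h]
      field_simp
  have hc0 : ∀ j, 0 ≤ c j := by
    intro j
    by_cases h : lam j = 0
    · simp [hcdef, h]
    · simp only [hcdef, if_neg h]
      exact div_nonneg (sq_nonneg _) (hlam0 j)
  have hc1 : ∀ j, c j ≤ 1 := by
    intro j
    by_cases h : lam j = 0
    · simp [hcdef, h]
    · simp only [hcdef, if_neg h]
      rw [div_le_one (lt_of_le_of_ne (hlam0 j) (Ne.symm h))]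
      exact hPv_le j
  -- Parseval for the projection
  set r := Module.finrank ℝ V with hr
  set b := stdOrthonormalBasis ℝ V with hb
  set e : Fin r → H := fun k => ((b k : V) : H) with he
  have hPx : ∀ x : H, ‖P x‖ ^ 2 = ∑ k, ⟪e k, x⟫ ^ 2 := by
    intro x
    set y := V.orthogonalProjectionOnto x with hy
    have h1 : ‖P x‖ = ‖y‖ := rfl
    have h2 : (⟪y, y⟫ : ℝ) = ∑ k, ⟪y, b k⟫ * ⟪b k, y⟫ := (b.sum_inner_mul_inner y y).symm
    have h3 : ∀ k, (⟪b k, y⟫ : ℝ) = ⟪e k, x⟫ := fun k =>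
      V.inner_orthogonalProjectionOnto_eq_of_mem_left (b k) x
    rw [h1, ← real_inner_self_eq_norm_sq, h2]
    refine Finset.sum_congr rfl fun k _ => ?_
    have h4 : (⟪y, b k⟫ : ℝ) = ⟪e k, x⟫ := (real_inner_comm (b k) y).trans (h3 k)
    rw [h4, h3 k]
    ring
  have hnorme : ∀ k, ‖e k‖ = 1 := by
    intro k
    have := b.orthonormal.1 k
    exact this
  -- Bessel: the total coefficient mass is at most N
  have hbessel : ∑ j, c j ≤ (N : ℝ) := by
    set w : {j : Fin m // lam j ≠ 0} → H :=
      fun j => (Real.sqrt (lam j.1))⁻¹ • v j.1 with hw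
    have hsqrt_ne : ∀ j : {j : Fin m // lam j ≠ 0}, Real.sqrt (lam j.1) ≠ 0 := by
      intro j
      exact Real.sqrt_ne_zero'.mpr (lt_of_le_of_ne (hlam0 j.1) (Ne.symm j.2))
    have hwON : Orthonormal ℝ w := by
      rw [orthonormal_iff_ite]
      intro a bb
      simp only [hw, real_inner_smul_left, real_inner_smul_right, hinner_vv]
      by_cases hab : a = bb
      · subst hab
        rw [if_pos rfl, if_pos rfl]
        have hs := Real.mul_self_sqrt (hlam0 a.1)
        rw [show (√(lam ↑a))⁻¹ * ((√(lam ↑a))⁻¹ * lam ↑a)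
            = lam ↑a / (√(lam ↑a) * √(lam ↑a)) from by ring, hs, div_self a.2]
      · rw [if_neg hab, if_neg (fun h => hab (Subtype.ext h))]
        ring
    have hfilter : ∑ j, c j
        = ∑ j ∈ Finset.univ.filter (fun j => lam j ≠ 0), ‖P (v j)‖ ^ 2 / lam j := by
      rw [Finset.sum_filter]
      refine Finset.sum_congr rfl fun j _ => ?_
      by_cases h : lam j = 0 <;> simp [hcdef, h]
    have hsub : ∑ j ∈ Finset.univ.filter (fun j => lam j ≠ 0), ‖P (v j)‖ ^ 2 / lam j
        = ∑ j : {j : Fin m // lam j ≠ 0}, ‖P (v j.1)‖ ^ 2 / lam j.1 := by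
      rw [Finset.sum_subtype (Finset.univ.filter (fun j => lam j ≠ 0))
        (p := fun j => lam j ≠ 0) (by simp) (fun j => ‖P (v j)‖ ^ 2 / lam j)]
    have hterm : ∀ j : {j : Fin m // lam j ≠ 0},
        ‖P (v j.1)‖ ^ 2 / lam j.1 = ∑ k, ⟪w j, e k⟫ ^ 2 := by
      intro j
      rw [hPx (v j.1), Finset.sum_div]
      refine Finset.sum_congr rfl fun k _ => ?_
      rw [hw]
      simp only [real_inner_smul_left]
      rw [mul_pow, real_inner_comm (v j.1) (e k)]
      have : ((Real.sqrt (lam j.1))⁻¹) ^ 2 = (lam j.1)⁻¹ := by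
        rw [inv_pow, Real.sq_sqrt (hlam0 j.1)]
      rw [this, div_eq_inv_mul]
    calc ∑ j, c j = ∑ j : {j : Fin m // lam j ≠ 0}, ∑ k, ⟪w j, e k⟫ ^ 2 := by
          rw [hfilter, hsub]
          exact Finset.sum_congr rfl fun j _ => hterm j
      _ = ∑ k, ∑ j : {j : Fin m // lam j ≠ 0}, ⟪w j, e k⟫ ^ 2 := Finset.sum_comm
      _ ≤ ∑ k : Fin r, (1 : ℝ) := by
          refine Finset.sum_le_sum fun k _ => ?_
          have hB := hwON.sum_inner_products_le (e k) (s := Finset.univ)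
          have h1 : ∑ j : {j : Fin m // lam j ≠ 0}, ⟪w j, e k⟫ ^ 2
              = ∑ j : {j : Fin m // lam j ≠ 0}, ‖⟪w j, e k⟫‖ ^ 2 := by
            refine Finset.sum_congr rfl fun j _ => ?_
            rw [Real.norm_eq_abs, sq_abs]
          rw [h1]
          calc _ ≤ ‖e k‖ ^ 2 := hB
            _ = 1 := by rw [hnorme k]; norm_num
      _ = (r : ℝ) := by simp
      _ ≤ (N : ℝ) := by exact_mod_cast hdim
  -- the cardinality of the head set
  have hcard : (Finset.univ.filter (fun j : Fin m => (j : ℕ) < N)).card = N := by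
    rcases lt_or_eq_of_le hN with h | h
    · have : Finset.univ.filter (fun j : Fin m => (j : ℕ) < N) = Finset.Iio ⟨N, h⟩ := by
        ext j
        simp [Fin.lt_def]
      rw [this, Fin.card_Iio]
    · have : Finset.univ.filter (fun j : Fin m => (j : ℕ) < N) = Finset.univ := by
        ext j
        have := j.isLt
        simp only [Finset.mem_filter, Finset.mem_univ, true_and, iff_true]
        omega
      rw [this, Finset.card_univ, Fintype.card_fin, h]
  -- the threshold eigenvalue
  set μ : ℝ := if h : N < m then lam ⟨N, h⟩ else 0 with hμ
  have hμ0 : 0 ≤ μ := by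
    rw [hμ]
    split
    · exact hlam0 _
    · exact le_refl 0
  have hμle : ∀ j : Fin m, N ≤ (j : ℕ) → lam j ≤ μ := by
    intro j hj
    have hNm : N < m := lt_of_le_of_lt hj j.isLt
    rw [hμ, dif_pos hNm]
    exact hdec (by simpa [Fin.le_def] using hj)
  have hμge : ∀ j : Fin m, (j : ℕ) < N → μ ≤ lam j := by
    intro j hj
    rw [hμ]
    split
    · exact hdec (by simp [Fin.le_def]; omega)
    · exact hlam0 j
  -- main scalar inequality
  have hmain : ∑ j, c j * lam j
      ≤ ∑ j ∈ Finset.univ.filter (fun j : Fin m => (j : ℕ) < N), lam j := by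
    set s1 := Finset.univ.filter (fun j : Fin m => (j : ℕ) < N) with hs1
    set s2 := Finset.univ.filter (fun j : Fin m => ¬ (j : ℕ) < N) with hs2
    have hsplit : ∑ j, c j * lam j = ∑ j ∈ s1, c j * lam j + ∑ j ∈ s2, c j * lam j :=
      (Finset.sum_filter_add_sum_filter_not Finset.univ _ _).symm
    have hcsplit : ∑ j ∈ s1, c j + ∑ j ∈ s2, c j = ∑ j, c j :=
      Finset.sum_filter_add_sum_filter_not Finset.univ _ _
    have hA : ∑ j ∈ s1, c j * lam j ≤ ∑ j ∈ s1, (lam j + (c j - 1) * μ) := by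
      refine Finset.sum_le_sum fun j hj => ?_
      simp only [hs1, Finset.mem_filter] at hj
      have h1 : μ ≤ lam j := hμge j hj.2
      have h2 : c j - 1 ≤ 0 := by linarith [hc1 j]
      nlinarith
    have hA2 : ∑ j ∈ s1, (lam j + (c j - 1) * μ)
        = ∑ j ∈ s1, lam j + ((∑ j ∈ s1, c j) * μ - (N : ℝ) * μ) := by
      rw [Finset.sum_add_distrib]
      congr 1
      have : ∑ j ∈ s1, (c j - 1) * μ = (∑ j ∈ s1, (c j - 1)) * μ :=
        (Finset.sum_mul _ _ _).symm
      rw [this, Finset.sum_sub_distrib, Finset.sum_const, hcard]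
      push_cast
      ring
    have hB : ∑ j ∈ s2, c j * lam j ≤ (∑ j ∈ s2, c j) * μ := by
      rw [Finset.sum_mul]
      refine Finset.sum_le_sum fun j hj => ?_
      simp only [hs2, Finset.mem_filter] at hj
      exact mul_le_mul_of_nonneg_left (hμle j (le_of_not_gt hj.2)) (hc0 j)
    have hfac : (∑ j ∈ s1, c j + ∑ j ∈ s2, c j - (N : ℝ)) * μ ≤ 0 := by
      apply mul_nonpos_of_nonpos_of_nonneg _ hμ0
      rw [hcsplit]
      linarith [hbessel]
    have hexp : (∑ j ∈ s1, c j + ∑ j ∈ s2, c j - (N : ℝ)) * μ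
        = (∑ j ∈ s1, c j) * μ - (N : ℝ) * μ + (∑ j ∈ s2, c j) * μ := by ring
    rw [hexp] at hfac
    linarith
  -- final assembly
  have hRHS : ∑ i, ‖u i - (V.orthogonalProjectionOnto (u i) : H)‖ ^ 2
      = ∑ j, lam j - ∑ j, c j * lam j := by
    have h1 : ∀ i, ‖u i - (V.orthogonalProjectionOnto (u i) : H)‖ ^ 2
        = ‖u i‖ ^ 2 - ‖P (u i)‖ ^ 2 := fun i => pyth (u i)
    rw [Finset.sum_congr rfl fun i _ => h1 i, Finset.sum_sub_distrib, tracesum, ← hproj]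
    congr 1
    exact Finset.sum_congr rfl fun j _ => (hc_mul j).symm
  have hsplitlam := Finset.sum_filter_add_sum_filter_not Finset.univ
    (fun j : Fin m => (j : ℕ) < N) lam
  have hfilteq : Finset.univ.filter (fun j : Fin m => ¬ (j : ℕ) < N)
      = Finset.univ.filter (fun i : Fin m => N ≤ (i : ℕ)) := by
    apply Finset.filter_congr
    intro j _
    simp [not_lt]
  rw [hRHS, ← hfilteq]
  linarith [hmain, hsplitlam]
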